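/- arXiv:1302.5896 — 5 statements merged into one kernel-verified Lean document; each statement's English description precedes it below -/
import Mathlib

section
/- Let (X,d) be a finite ultrametric space with at least 2 points. Define the diametral graph G_d on vertex set X by joining u and v iff d(u,v) = diam X. Then G_d is a complete multipartite graph with at least 2 parts; equivalently, the relation 'd(u,v) < diam X' is an equivalence relation on X with at least 2 equivalence classes, and points in distinct classes are at distance diam X. -/
/-- An ultrametric space: a metric space satisfying the strong triangle inequality. -/
def IsUltrametric (X : Type*) [MetricSpace X] : Prop :=
  ∀ x y z : X, dist x y ≤ max (dist x z) (dist z y)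

/-- The ballean of a metric space: closed balls whose radius is realized as a
distance from the center (i.e. lies in the spectrum `Sp_t(X)`). -/
def Ballean (X : Type*) [MetricSpace X] : Set (Set X) :=
  {B | ∃ t r, (∃ x : X, dist x t = r) ∧ B = Metric.closedBall t r}

/-- A ball-preserving map: images of balls of `B_X` are in `B_Y`, preimages of
balls of `B_Y` are in `B_X`. -/
def BallPreserving {X Y : Type*} [MetricSpace X] [MetricSpace Y] (F : X → Y) : Prop :=
  (∀ Z ∈ Ballean X, F '' Z ∈ Ballean Y) ∧ (∀ W ∈ Ballean Y, F ⁻¹' W ∈ Ballean X)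
theorem diametral_graph_complete_multipartite {X : Type*} [MetricSpace X] [Fintype X]
    (hX : IsUltrametric X) (hcard : 2 ≤ Fintype.card X) :
    Equivalence (fun u v : X => dist u v < Metric.diam (Set.univ : Set X)) ∧
      (∃ u v : X, ¬ dist u v < Metric.diam (Set.univ : Set X)) ∧
      (∀ u v : X, ¬ dist u v < Metric.diam (Set.univ : Set X) →
        dist u v = Metric.diam (Set.univ : Set X)) := by
  classical
  set D := Metric.diam (Set.univ : Set X) with hD
  have hbdd : Bornology.IsBounded (Set.univ : Set X) := Set.finite_univ.isBounded
  have hle : ∀ u v : X, dist u v ≤ D := fun u v =>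
    Metric.dist_le_diam_of_mem hbdd (Set.mem_univ u) (Set.mem_univ v)
  -- diam is attained
  obtain ⟨p, _, hpmax⟩ := (Finset.univ ×ˢ Finset.univ : Finset (X × X)).exists_max_image
    (fun p => dist p.1 p.2)
    (by
      obtain ⟨x⟩ := ((Fintype.card_pos_iff (α := X)).mp (by omega))
      exact ⟨(x, x), by simp⟩)
  have hattain : dist p.1 p.2 = D := by
    refine le_antisymm (hle _ _) ?_
    refine Metric.diam_le_of_forall_dist_le dist_nonneg ?_
    intro u _ v _
    exact hpmax (u, v) (by simp)
  -- diam is positive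
  have hDpos : 0 < D := by
    obtain ⟨x, y, hxy⟩ := Fintype.exists_pair_of_one_lt_card (α := X) (by omega)
    exact lt_of_lt_of_le (dist_pos.mpr hxy) (hle x y)
  refine ⟨⟨fun u => by simpa using hDpos, ?_, ?_⟩, ⟨p.1, p.2, by simp [hattain]⟩, ?_⟩
  · intro u v h
    simpa [dist_comm] using h
  · intro u v w h1 h2
    exact lt_of_le_of_lt (hX u w v) (max_lt h1 h2)
  · intro u v h
    exact le_antisymm (hle u v) (not_lt.mp h)
end

section
/- Let (X,d) be a finite ultrametric space with |X| ≥ 2, and let X_1,...,X_k be the parts of the complete multipartite diametral graph G_d (i.e., the equivalence classes of the relation d(u,v) < diam X). Then each X_i is a closed ball in X; more precisely, for any x_i ∈ X_i, X_i = {x ∈ X : d(x,x_i) ≤ diam X_i}. -/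
theorem diametral_class_is_ball {X : Type*} [MetricSpace X] [Fintype X]
    (hX : IsUltrametric X) (hcard : 2 ≤ Fintype.card X) (x₀ : X) :
    {x : X | dist x x₀ < Metric.diam (Set.univ : Set X)} =
      {x : X | dist x x₀ ≤ Metric.diam {y : X | dist y x₀ < Metric.diam (Set.univ : Set X)}} := by
  set D := Metric.diam (Set.univ : Set X) with hD
  set A : Set X := {x : X | dist x x₀ < D} with hA
  have hbdd : Bornology.IsBounded (Set.univ : Set X) := Set.Finite.isBounded (Set.finite_univ)
  have hDpos : 0 < D := by
    have : Nontrivial X := Fintype.one_lt_card_iff_nontrivial.mp hcard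
    obtain ⟨x, y, hxy⟩ := this
    have h1 : dist x y ≤ D := Metric.dist_le_diam_of_mem hbdd trivial trivial
    have h2 : 0 < dist x y := dist_pos.mpr hxy
    linarith
  have hx₀A : x₀ ∈ A := by simpa [hA] using hDpos
  -- the finset of distances from A to x₀
  have hAfin : A.Finite := Set.toFinite A
  have hAbdd : Bornology.IsBounded A := hAfin.isBounded
  -- m = max distance to x₀ within A
  obtain ⟨m, hmA, hmmax⟩ := Set.exists_max_image A (fun x => dist x x₀) hAfin ⟨x₀, hx₀A⟩
  have hmltD : dist m x₀ < D := hmA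
  have hdiamA : Metric.diam A ≤ dist m x₀ := by
    apply Metric.diam_le_of_forall_dist_le dist_nonneg
    intro a ha b hb
    calc dist a b ≤ max (dist a x₀) (dist x₀ b) := hX a b x₀
      _ ≤ dist m x₀ := by
          rw [dist_comm x₀ b]
          exact max_le (hmmax a ha) (hmmax b hb)
  ext x
  simp only [Set.mem_setOf_eq]
  constructor
  · intro hx
    exact Metric.dist_le_diam_of_mem hAbdd hx hx₀A
  · intro hx
    calc dist x x₀ ≤ Metric.diam A := hx
      _ ≤ dist m x₀ := hdiamA
      _ < D := hmltD
end

section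
/- Let X, Y be metric spaces and F : X → Y a ball-preserving bijection. Then the map B ↦ F(B) is an order isomorphism between the posets (B_X, ⊆) and (B_Y, ⊆). -/
theorem ballPreserving_orderIso {X Y : Type*} [MetricSpace X] [MetricSpace Y]
    (F : X → Y) (hbij : Function.Bijective F) (hF : BallPreserving F) :
    ∃ e : {B // B ∈ Ballean X} ≃o {B // B ∈ Ballean Y},
      ∀ B : {B // B ∈ Ballean X}, (e B : Set Y) = F '' (B : Set X) := by
  refine ⟨⟨⟨fun B => ⟨F '' B.1, hF.1 B.1 B.2⟩, fun W => ⟨F ⁻¹' W.1, hF.2 W.1 W.2⟩,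
    fun B => Subtype.ext (Set.preimage_image_eq B.1 hbij.injective),
    fun W => Subtype.ext (Set.image_preimage_eq W.1 hbij.surjective)⟩,
    fun {B B'} => Set.image_subset_image_iff hbij.injective⟩, fun B => rfl⟩
end

section
/- Let (X,d) be a finite ultrametric space. Then B ∈ B_X if and only if B is nonempty and B = {x ∈ X : d(x,b) ≤ diam B} for every b ∈ B. -/
theorem mem_ballean_iff {X : Type*} [MetricSpace X] [Fintype X]
    (hX : IsUltrametric X) (B : Set X) :
    B ∈ Ballean X ↔
      B.Nonempty ∧ ∀ b ∈ B, B = {x : X | dist x b ≤ Metric.diam B} := by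
  constructor
  · rintro ⟨t, r, ⟨x, hx⟩, rfl⟩
    have hr0 : 0 ≤ r := hx ▸ dist_nonneg
    have htB : t ∈ Metric.closedBall t r := by simp [hr0]
    have hxB : x ∈ Metric.closedBall t r := by simp [hx.le]
    have hbdd : Bornology.IsBounded (Metric.closedBall t r : Set X) :=
      Metric.isBounded_closedBall
    have hdiam : Metric.diam (Metric.closedBall t r : Set X) = r := by
      apply le_antisymm
      · apply Metric.diam_le_of_forall_dist_le hr0
        intro a ha b hb
        calc dist a b ≤ max (dist a t) (dist t b) := hX a b t
          _ ≤ r := max_le ha (dist_comm t b ▸ hb)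
      · calc r = dist x t := hx.symm
          _ ≤ Metric.diam (Metric.closedBall t r : Set X) :=
            Metric.dist_le_diam_of_mem hbdd hxB htB
    refine ⟨⟨t, htB⟩, fun b hb => ?_⟩
    rw [hdiam]
    ext z
    simp only [Metric.mem_closedBall, Set.mem_setOf_eq]
    constructor
    · intro hz
      calc dist z b ≤ max (dist z t) (dist t b) := hX z b t
        _ ≤ r := max_le hz (dist_comm t b ▸ hb)
    · intro hz
      calc dist z t ≤ max (dist z b) (dist b t) := hX z t b
        _ ≤ r := max_le hz hb
  · rintro ⟨⟨b, hb⟩, hB⟩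
    -- find a pair realizing the diameter
    have hBfin : B.Finite := Set.toFinite B
    obtain ⟨p, hp, hpmax⟩ := Finset.exists_max_image (hBfin.toFinset ×ˢ hBfin.toFinset)
      (fun p => dist p.1 p.2) ⟨(b, b), by simp [Finset.mem_product, hBfin, hb]⟩
    simp only [Finset.mem_product, Set.Finite.mem_toFinset] at hp
    have hbdd : Bornology.IsBounded B := hBfin.isBounded
    have hdiam : Metric.diam B = dist p.1 p.2 := by
      apply le_antisymm
      · apply Metric.diam_le_of_forall_dist_le dist_nonneg
        intro a ha c hc
        exact hpmax (a, c) (by simp [Finset.mem_product, ha, hc])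
      · exact Metric.dist_le_diam_of_mem hbdd hp.1 hp.2
    refine ⟨p.2, Metric.diam B, ⟨p.1, hdiam.symm⟩, ?_⟩
    exact hB p.2 hp.2
end

section
/- Let X and Y be finite ultrametric spaces and Φ : X → Y a ball-preserving bijection. Then the posets (B_X, ⊆) and (B_Y, ⊆) are isomorphic. Conversely, if (B_X, ⊆) and (B_Y, ⊆) are isomorphic as posets, then there exists a ball-preserving bijection Φ : X → Y. -/
lemma singleton_mem_ballean {X : Type*} [MetricSpace X] (x : X) : {x} ∈ Ballean X :=
  ⟨x, 0, ⟨x, dist_self x⟩, Metric.closedBall_zero.symm⟩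

lemma ballean_nonempty {X : Type*} [MetricSpace X] {B : Set X} (hB : B ∈ Ballean X) :
    ∃ t, t ∈ B := by
  obtain ⟨t, r, ⟨x, hx⟩, rfl⟩ := hB
  exact ⟨t, Metric.mem_closedBall_self (hx ▸ dist_nonneg)⟩

lemma iso_singleton {X Y : Type*} [MetricSpace X] [MetricSpace Y]
    (e : {B // B ∈ Ballean X} ≃o {B // B ∈ Ballean Y}) (x : X) :
    ∃ y : Y, (e ⟨{x}, singleton_mem_ballean x⟩).1 = {y} := by
  obtain ⟨t, ht⟩ := ballean_nonempty (e ⟨{x}, singleton_mem_ballean x⟩).2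
  have h1 : (⟨{t}, singleton_mem_ballean t⟩ : {B // B ∈ Ballean Y}) ≤
      e ⟨{x}, singleton_mem_ballean x⟩ := Set.singleton_subset_iff.mpr ht
  have h2 := e.symm.monotone h1
  rw [e.symm_apply_apply] at h2
  have h2' : (e.symm ⟨{t}, singleton_mem_ballean t⟩).1 ⊆ {x} := h2
  obtain ⟨s, hs⟩ := ballean_nonempty (e.symm ⟨{t}, singleton_mem_ballean t⟩).2
  have hsx : s = x := h2' hs
  have heq : e.symm ⟨{t}, singleton_mem_ballean t⟩ =
      ⟨{x}, singleton_mem_ballean x⟩ := by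
    apply Subtype.ext
    exact Set.Subset.antisymm h2' (Set.singleton_subset_iff.mpr (hsx ▸ hs))
  refine ⟨t, ?_⟩
  have := congrArg e heq
  rw [e.apply_symm_apply] at this
  rw [← this]

theorem ballean_iso_iff_ballPreserving {X Y : Type*} [MetricSpace X] [MetricSpace Y]
    [Fintype X] [Fintype Y] [Nonempty X] [Nonempty Y]
    (hX : IsUltrametric X) (hY : IsUltrametric Y) :
    (∃ Φ : X → Y, Function.Bijective Φ ∧ BallPreserving Φ) ↔
      Nonempty ({B // B ∈ Ballean X} ≃o {B // B ∈ Ballean Y}) := by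
  constructor
  · rintro ⟨Φ, hbij, h1, h2⟩
    exact ⟨{ toFun := fun B => ⟨Φ '' B.1, h1 B.1 B.2⟩
             invFun := fun W => ⟨Φ ⁻¹' W.1, h2 W.1 W.2⟩
             left_inv := fun B => Subtype.ext (Set.preimage_image_eq B.1 hbij.1)
             right_inv := fun W => Subtype.ext (Set.image_preimage_eq W.1 hbij.2)
             map_rel_iff' := fun {A B} => Set.image_subset_image_iff hbij.1 }⟩
  · rintro ⟨e⟩
    classical
    choose Φ hΦ using fun x => iso_singleton e x
    choose Ψ hΨ using fun y => iso_singleton e.symm y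
    have hEΦ : ∀ x, e ⟨{x}, singleton_mem_ballean x⟩ =
        ⟨{Φ x}, singleton_mem_ballean _⟩ := fun x => Subtype.ext (hΦ x)
    have hES : ∀ y, e.symm ⟨{y}, singleton_mem_ballean y⟩ =
        ⟨{Ψ y}, singleton_mem_ballean _⟩ := fun y => Subtype.ext (hΨ y)
    have hΨΦ : ∀ x, Ψ (Φ x) = x := by
      intro x
      have h := hES (Φ x)
      rw [← hEΦ x, e.symm_apply_apply] at h
      have h' := congrArg Subtype.val h
      simpa [eq_comm] using h'
    have hΦΨ : ∀ y, Φ (Ψ y) = y := by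
      intro y
      have h := hEΦ (Ψ y)
      rw [← hES y, e.apply_symm_apply] at h
      have h' := congrArg Subtype.val h
      simpa [eq_comm] using h'
    have hbij : Function.Bijective Φ :=
      ⟨Function.LeftInverse.injective hΨΦ, fun y => ⟨Ψ y, hΦΨ y⟩⟩
    have himg : ∀ Z (hZ : Z ∈ Ballean X), Φ '' Z = (e ⟨Z, hZ⟩).1 := by
      intro Z hZ
      ext y
      constructor
      · rintro ⟨x, hx, rfl⟩
        have h1 : (⟨{x}, singleton_mem_ballean x⟩ : {B // B ∈ Ballean X}) ≤ ⟨Z, hZ⟩ :=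
          Set.singleton_subset_iff.mpr hx
        have h2 := e.monotone h1
        rw [hEΦ x] at h2
        have h2' : ({Φ x} : Set Y) ⊆ (e ⟨Z, hZ⟩).1 := h2
        exact h2' rfl
      · intro hy
        have h1 : (⟨{y}, singleton_mem_ballean y⟩ : {B // B ∈ Ballean Y}) ≤
            e ⟨Z, hZ⟩ := Set.singleton_subset_iff.mpr hy
        have h2 := e.symm.monotone h1
        rw [hES y, e.symm_apply_apply] at h2
        have h2' : ({Ψ y} : Set X) ⊆ Z := h2
        exact ⟨Ψ y, h2' rfl, hΦΨ y⟩
    refine ⟨Φ, hbij, fun Z hZ => ?_, fun W hW => ?_⟩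
    · rw [himg Z hZ]; exact (e ⟨Z, hZ⟩).2
    · have hZ := (e.symm ⟨W, hW⟩).2
      have hkey : Φ '' (e.symm ⟨W, hW⟩).1 = W := by
        rw [himg _ hZ]
        have heta : (⟨(e.symm ⟨W, hW⟩).1, hZ⟩ : {B // B ∈ Ballean X}) =
            e.symm ⟨W, hW⟩ := rfl
        rw [heta, e.apply_symm_apply]
      rw [← hkey, Set.preimage_image_eq _ hbij.1]
      exact hZ
end
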